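/- Let F(z) = exp(-(1+z)/(1-z)) on 𝔻 and for α ∈ 𝔻 let τ_α(z) = (z+α)/(1+ᾱz). If α ∈ 𝔻, α ≠ 0, then f = τ_α ∘ F and g(z) = f(-z) are both holomorphic self-maps of 𝔻 with no critical points in 𝔻 (f' and g' never vanish), yet there is no conformal automorphism T of 𝔻 with f = T ∘ g. -/

import Mathlib

open Complex


lemma abs_lt_of_normSq_lt {a b : ℂ} (h : Complex.normSq a < Complex.normSq b) :
    ‖a‖ < ‖b‖ := by
  nlinarith [Complex.sq_norm a, Complex.sq_norm b, norm_nonneg a, norm_nonneg b,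
    sq_nonneg (‖a‖ - ‖b‖)]

lemma one_sub_ne {z : ℂ} (hz : ‖z‖ < 1) : (1 : ℂ) - z ≠ 0 := by
  intro h
  have : z = 1 := by linear_combination -h
  simp [this] at hz

lemma re_pos {z : ℂ} (hz : ‖z‖ < 1) : 0 < ((1 + z) / (1 - z)).re := by
  have h1 : (1 : ℂ) - z ≠ 0 := one_sub_ne hz
  have h2 : Complex.normSq (1 - z) > 0 := by
    simpa [Complex.normSq_pos] using h1
  have hns : Complex.normSq z < 1 := by
    have := Complex.sq_norm z
    nlinarith [norm_nonneg z]
  rw [Complex.div_re]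
  have e1 : (1 + z).re * (1 - z).re + (1 + z).im * (1 - z).im = 1 - Complex.normSq z := by
    simp [Complex.normSq_apply]; ring
  rw [← add_div, e1]
  exact div_pos (by linarith) h2

lemma denom_ne {α w : ℂ} (hα : ‖α‖ < 1) (hw : ‖w‖ < 1) :
    1 + (starRingEnd ℂ) α * w ≠ 0 := by
  intro h
  have h1 : (starRingEnd ℂ) α * w = -1 := by linear_combination h
  have h2 : ‖(starRingEnd ℂ) α * w‖ = ‖α‖ * ‖w‖ := by
    simp [map_mul]
  rw [h1] at h2
  simp at h2
  nlinarith [norm_nonneg α, norm_nonneg w]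

lemma normSq_diff (α w : ℂ) :
    Complex.normSq (1 + (starRingEnd ℂ) α * w) - Complex.normSq (w + α)
      = (1 - Complex.normSq α) * (1 - Complex.normSq w) := by
  simp [Complex.normSq_apply, Complex.add_re, Complex.add_im, Complex.mul_re, Complex.mul_im,
    Complex.conj_re, Complex.conj_im]
  ring

lemma tau_mem {α w : ℂ} (hα : ‖α‖ < 1) (hw : ‖w‖ < 1) :
    ‖(w + α) / (1 + (starRingEnd ℂ) α * w)‖ < 1 := by
  have hd := denom_ne hα hw
  have hda : 0 < ‖1 + (starRingEnd ℂ) α * w‖ := by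
    simpa [norm_pos_iff] using hd
  rw [norm_div, div_lt_one hda]
  apply abs_lt_of_normSq_lt
  have h1 : Complex.normSq α < 1 := by
    have := Complex.sq_norm α; nlinarith [norm_nonneg α]
  have h2 : Complex.normSq w < 1 := by
    have := Complex.sq_norm w; nlinarith [norm_nonneg w]
  nlinarith [normSq_diff α w]

lemma tau_inj {α w1 w2 : ℂ} (hα : ‖α‖ < 1) (hw1 : ‖w1‖ < 1)
    (hw2 : ‖w2‖ < 1)
    (h : (w1 + α) / (1 + (starRingEnd ℂ) α * w1) = (w2 + α) / (1 + (starRingEnd ℂ) α * w2)) :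
    w1 = w2 := by
  have hd1 := denom_ne hα hw1
  have hd2 := denom_ne hα hw2
  rw [div_eq_div_iff hd1 hd2] at h
  have hne : (1 : ℂ) - (starRingEnd ℂ) α * α ≠ 0 := by
    intro h0
    have h1 : (starRingEnd ℂ) α * α = 1 := by linear_combination -h0
    have h2 : ‖(starRingEnd ℂ) α * α‖ = ‖α‖ * ‖α‖ := by
      simp [map_mul]
    rw [h1] at h2
    simp at h2
    nlinarith [norm_nonneg α]
  have h3 : (w1 - w2) * (1 - (starRingEnd ℂ) α * α) = 0 := by linear_combination h
  rcases mul_eq_zero.1 h3 with h4 | h4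
  · linear_combination h4
  · exact absurd h4 hne

lemma F_abs_lt {z : ℂ} (hz : ‖z‖ < 1) :
    ‖Complex.exp (-(1 + z) / (1 - z))‖ < 1 := by
  rw [Complex.norm_exp, Real.exp_lt_one_iff]
  have := re_pos hz
  have he : (-(1 + z) / (1 - z)).re = -(((1 + z) / (1 - z)).re) := by
    rw [neg_div, Complex.neg_re]
  rw [he]; linarith

lemma hasDerivAt_F {z : ℂ} (hz : (1:ℂ) - z ≠ 0) :
    HasDerivAt (fun z : ℂ => Complex.exp (-(1 + z) / (1 - z)))
      (Complex.exp (-(1 + z) / (1 - z)) * (-2 / (1 - z) ^ 2)) z := by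
  have h1 : HasDerivAt (fun z : ℂ => -(1 + z)) (-1) z := by
    have := ((hasDerivAt_id' z).const_add (1:ℂ)).neg; exact this
  have h2 : HasDerivAt (fun z : ℂ => 1 - z) (-1) z := by
    have := (hasDerivAt_const z (1:ℂ)).sub (hasDerivAt_id' z); rw [zero_sub] at this; exact this
  have h3 := h1.div h2 hz
  have h4 : (-1 * (1 - z) - -(1 + z) * -1) / (1 - z) ^ 2 = -2 / (1 - z) ^ 2 := by
    rw [div_eq_div_iff (pow_ne_zero 2 hz) (pow_ne_zero 2 hz)]; ring
  rw [h4] at h3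
  exact h3.cexp

lemma hasDerivAt_tau {α w : ℂ} (hd : 1 + (starRingEnd ℂ) α * w ≠ 0) :
    HasDerivAt (fun w : ℂ => (w + α) / (1 + (starRingEnd ℂ) α * w))
      ((1 - (starRingEnd ℂ) α * α) / (1 + (starRingEnd ℂ) α * w) ^ 2) w := by
  have h1 : HasDerivAt (fun w : ℂ => w + α) 1 w := by
    simpa using (hasDerivAt_id w).add_const α
  have h2 : HasDerivAt (fun w : ℂ => 1 + (starRingEnd ℂ) α * w) ((starRingEnd ℂ) α) w := by
    simpa using ((hasDerivAt_id w).const_mul ((starRingEnd ℂ) α)).const_add (1:ℂ)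
  have h3 := h1.div h2 hd
  have h4 : (1 * (1 + (starRingEnd ℂ) α * w) - (w + α) * (starRingEnd ℂ) α)
      / (1 + (starRingEnd ℂ) α * w) ^ 2
      = (1 - (starRingEnd ℂ) α * α) / (1 + (starRingEnd ℂ) α * w) ^ 2 := by
    rw [div_eq_div_iff (pow_ne_zero 2 hd) (pow_ne_zero 2 hd)]; ring
  rw [h4] at h3
  exact h3

lemma one_sub_conj_mul_ne {α : ℂ} (hα : ‖α‖ < 1) :
    (1 : ℂ) - (starRingEnd ℂ) α * α ≠ 0 := by
  intro h0
  have h1 : (starRingEnd ℂ) α * α = 1 := by linear_combination -h0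
  have h2 : ‖(starRingEnd ℂ) α * α‖ = ‖α‖ * ‖α‖ := by
    simp [map_mul]
  rw [h1] at h2
  simp at h2
  nlinarith [norm_nonneg α]

theorem aux_key
    (α : ℂ) (habs : ‖α‖ < 1)
    : ∀ z : ℂ, ‖z‖ < 1 → ∃ d : ℂ, d ≠ 0 ∧
      HasDerivAt (fun z : ℂ => (Complex.exp (-(1 + z) / (1 - z)) + α) /
        (1 + (starRingEnd ℂ) α * Complex.exp (-(1 + z) / (1 - z)))) d z := by
  intro z hz
  have h1 : (1:ℂ) - z ≠ 0 := one_sub_ne hz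
  have hFz := F_abs_lt hz
  have hd := denom_ne habs hFz
  have hdF := hasDerivAt_F h1
  have hdτ := hasDerivAt_tau (α := α) hd
  have hcomp := hdτ.comp z hdF
  refine ⟨_, ?_, hcomp⟩
  apply mul_ne_zero
  · exact div_ne_zero (one_sub_conj_mul_ne habs) (pow_ne_zero 2 hd)
  · exact mul_ne_zero (Complex.exp_ne_zero _)
      (div_ne_zero (by norm_num) (pow_ne_zero 2 h1))

lemma aux_final (α : ℂ) (habs : ‖α‖ < 1) (T : ℂ → ℂ)
    (hT : ∀ z ∈ Metric.ball (0:ℂ) 1,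
      (Complex.exp (-(1 + z) / (1 - z)) + α) /
        (1 + (starRingEnd ℂ) α * Complex.exp (-(1 + z) / (1 - z)))
      = T ((Complex.exp (-(1 + -z) / (1 - -z)) + α) /
        (1 + (starRingEnd ℂ) α * Complex.exp (-(1 + -z) / (1 - -z))))) : False := by
  set c : ℂ := (Real.pi : ℂ) * Complex.I with hc
  have hcre : c.re = 0 := by simp [hc]
  have hcim : c.im = Real.pi := by simp [hc]
  have h1c : (1:ℂ) - c ≠ 0 := by
    intro h
    have := congrArg Complex.re h
    simp [hcre] at this
  have h12c : (1:ℂ) - 2*c ≠ 0 := by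
    intro h
    have := congrArg Complex.re h
    simp [Complex.sub_re, Complex.mul_re, hcre, hcim] at this
  set z1 : ℂ := -c/(1-c) with hz1
  have e0 : 1 - z1 = 1/(1-c) := by
    rw [hz1]; field_simp; ring
  have e0' : 1 + z1 = (1-2*c)/(1-c) := by
    rw [hz1]; field_simp; ring
  have habs1 : ‖z1‖ < 1 := by
    have hn : Complex.normSq c < Complex.normSq (1-c) := by
      simp [Complex.normSq_apply, Complex.sub_re, Complex.sub_im, hcre, hcim]
    have h2 := abs_lt_of_normSq_lt hn
    rw [hz1, norm_div, norm_neg]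
    rw [div_lt_one (norm_pos_iff.mpr h1c)]
    exact h2
  have habs1' : ‖-z1‖ < 1 := by simpa [norm_neg] using habs1
  have hFz1exp : Complex.exp (-(1 + z1) / (1 - z1)) = Complex.exp (-1) := by
    have e1 : -(1 + z1) / (1 - z1) = -1 + 2*c := by
      rw [e0, e0']
      field_simp
      ring
    rw [e1, Complex.exp_add]
    have h2c : Complex.exp (2*c) = 1 := by
      rw [hc, ← mul_assoc]
      exact Complex.exp_two_pi_mul_I
    rw [h2c, mul_one]
  have hmem : ∀ w : ℂ, ‖w‖ < 1 → w ∈ Metric.ball (0:ℂ) 1 := by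
    intro w hw; simpa using hw
  have h0 := hT 0 (hmem 0 (by norm_num))
  norm_num at h0
  have hE := hT (-z1) (hmem _ habs1')
  rw [neg_neg] at hE
  rw [hFz1exp] at hE
  rw [← h0] at hE
  have hax : ‖Complex.exp (-(1 + -z1)/(1 - -z1))‖ < 1 := F_abs_lt habs1'
  have hax2 : ‖Complex.exp (-1 : ℂ)‖ < 1 := by
    rw [Complex.norm_exp]
    norm_num [Real.exp_lt_one_iff]
  have heq := tau_inj habs hax hax2 hE
  have e2 : -(1 + -z1) / (1 - -z1) = -1/(1-2*c) := by
    have t1 : 1 + -z1 = 1/(1-c) := by rw [← e0]; ring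
    have t2 : 1 - -z1 = (1-2*c)/(1-c) := by rw [← e0']; ring
    rw [t1, t2]
    field_simp
  rw [e2] at heq
  rw [Complex.exp_eq_exp_iff_exists_int] at heq
  obtain ⟨n, hn⟩ := heq
  rw [div_eq_iff h12c] at hn
  rw [hc] at hn
  have hre := congrArg Complex.re hn
  have him := congrArg Complex.im hn
  simp [Complex.sub_re, Complex.sub_im, Complex.add_re, Complex.add_im, Complex.mul_re,
    Complex.mul_im, Complex.I_re, Complex.I_im, Complex.ofReal_re, Complex.ofReal_im,
    Complex.intCast_re, Complex.intCast_im, Complex.one_re, Complex.one_im,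
    Complex.neg_re, Complex.neg_im] at hre him
  rcases (Or.inl hre : n = 0 ∨ Real.pi = 0) with h | h
  · rw [h] at him
    push_cast at him
    nlinarith [Real.pi_pos]
  · exact absurd h Real.pi_ne_zero


/-- `T` is a conformal automorphism of the unit disk: a holomorphic bijection of `𝔻`
with holomorphic inverse. -/
def IsDiskAutomorphism (T : ℂ → ℂ) : Prop :=
  DifferentiableOn ℂ T (Metric.ball (0:ℂ) 1) ∧
  Set.MapsTo T (Metric.ball (0:ℂ) 1) (Metric.ball (0:ℂ) 1) ∧
  ∃ S : ℂ → ℂ, DifferentiableOn ℂ S (Metric.ball (0:ℂ) 1) ∧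
    Set.MapsTo S (Metric.ball (0:ℂ) 1) (Metric.ball (0:ℂ) 1) ∧
    (∀ z ∈ Metric.ball (0:ℂ) 1, S (T z) = z) ∧
    (∀ z ∈ Metric.ball (0:ℂ) 1, T (S z) = z)

/-- With `F(z) = exp(-(1+z)/(1-z))`, `τ_α(z) = (z+α)/(1+ᾱz)`, `f = τ_α ∘ F`, `g(z) = f(-z)`
(for `α ∈ 𝔻 \ {0}`), both `f` and `g` are critical-point-free holomorphic self-maps of `𝔻`,
yet `f ≠ T ∘ g` for every conformal automorphism `T` of `𝔻`. -/
theorem blaschke_not_determined_by_critical_points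
    (α : ℂ) (hα : α ∈ Metric.ball (0:ℂ) 1) (hα0 : α ≠ 0)
    (F τ f g : ℂ → ℂ)
    (hF : ∀ z, F z = Complex.exp (-(1 + z) / (1 - z)))
    (hτ : ∀ z, τ z = (z + α) / (1 + (starRingEnd ℂ) α * z))
    (hf : ∀ z, f z = τ (F z))
    (hg : ∀ z, g z = f (-z)) :
    DifferentiableOn ℂ f (Metric.ball (0:ℂ) 1) ∧
    Set.MapsTo f (Metric.ball (0:ℂ) 1) (Metric.ball (0:ℂ) 1) ∧
    (∀ z ∈ Metric.ball (0:ℂ) 1, deriv f z ≠ 0) ∧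
    DifferentiableOn ℂ g (Metric.ball (0:ℂ) 1) ∧
    Set.MapsTo g (Metric.ball (0:ℂ) 1) (Metric.ball (0:ℂ) 1) ∧
    (∀ z ∈ Metric.ball (0:ℂ) 1, deriv g z ≠ 0) ∧
    ¬ ∃ T : ℂ → ℂ, IsDiskAutomorphism T ∧
        ∀ z ∈ Metric.ball (0:ℂ) 1, f z = T (g z) := by
  have habs : ‖α‖ < 1 := by
    simpa using mem_ball_zero_iff.1 hα
  have hball : ∀ w : ℂ, w ∈ Metric.ball (0:ℂ) 1 ↔ ‖w‖ < 1 := by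
    intro w; simp
  have hfc : f = fun z => (Complex.exp (-(1 + z) / (1 - z)) + α) /
      (1 + (starRingEnd ℂ) α * Complex.exp (-(1 + z) / (1 - z))) := by
    funext z; rw [hf, hτ, hF]
  have hgc : g = fun z => (Complex.exp (-(1 + -z) / (1 - -z)) + α) /
      (1 + (starRingEnd ℂ) α * Complex.exp (-(1 + -z) / (1 - -z))) := by
    funext z; rw [hg, hf, hτ, hF]
  subst hfc
  subst hgc
  have key := aux_key α habs
  have keyg : ∀ z : ℂ, ‖z‖ < 1 → ∃ d : ℂ, d ≠ 0 ∧
      HasDerivAt (fun z : ℂ => (Complex.exp (-(1 + -z) / (1 - -z)) + α) /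
        (1 + (starRingEnd ℂ) α * Complex.exp (-(1 + -z) / (1 - -z)))) d z := by
    intro z hz
    have hz' : ‖-z‖ < 1 := by simpa using hz
    obtain ⟨d, hd0, hd⟩ := key (-z) hz'
    refine ⟨d * -1, mul_ne_zero hd0 (by norm_num), ?_⟩
    exact hd.comp z (by have := (hasDerivAt_id' z).neg; exact this)
  refine ⟨?_, ?_, ?_, ?_, ?_, ?_, ?_⟩
  · intro z hz
    obtain ⟨d, _, hd⟩ := key z ((hball z).1 hz)
    exact hd.differentiableAt.differentiableWithinAt
  · intro z hz
    rw [hball] at hz ⊢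
    exact tau_mem habs (F_abs_lt hz)
  · intro z hz
    obtain ⟨d, hd0, hd⟩ := key z ((hball z).1 hz)
    rw [hd.deriv]; exact hd0
  · intro z hz
    obtain ⟨d, _, hd⟩ := keyg z ((hball z).1 hz)
    exact hd.differentiableAt.differentiableWithinAt
  · intro z hz
    rw [hball] at hz ⊢
    have hz' : ‖-z‖ < 1 := by simpa using hz
    exact tau_mem habs (F_abs_lt hz')
  · intro z hz
    obtain ⟨d, hd0, hd⟩ := keyg z ((hball z).1 hz)
    rw [hd.deriv]; exact hd0
  · rintro ⟨T, -, hT⟩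
    exact aux_final α habs T hT
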